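/- Let A be a nonempty finite subset of the countably infinite set X. Then the lattice Cl(A) of all clones on the finite set A (ordered by inclusion) is isomorphic to an interval of the complete lattice Cll(X) of local clones on X; explicitly, the map σ sending a clone C on A to the set of all finitary operations g on X whose restriction to the appropriate power of A agrees with some f ∈ C of the same arity is an order isomorphism from Cl(A) onto the interval [σ(projections on A), Pol({A})] of Cll(X). -/

import Mathlib

/-- A finitary operation on `X`: an `(n+1)`-ary function `X^(n+1) → X` (arities are ≥ 1). -/
abbrev FinOp (X : Type) := Σ n : ℕ, (Fin (n + 1) → X) → X

/-- A finitary relation on `X`: an `(m+1)`-ary relation `ρ ⊆ X^(m+1)` (arities are ≥ 1). -/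
abbrev FinRel (X : Type) := Σ m : ℕ, Set (Fin (m + 1) → X)

variable {X : Type}

/-- `C` is a clone: it contains all projections and is closed under composition. -/
def IsClone (C : Set (FinOp X)) : Prop :=
  (∀ (n : ℕ) (k : Fin (n + 1)), (⟨n, fun x => x k⟩ : FinOp X) ∈ C) ∧
  (∀ (n m : ℕ) (f : (Fin (n + 1) → X) → X) (g : Fin (n + 1) → (Fin (m + 1) → X) → X),
    (⟨n, f⟩ : FinOp X) ∈ C → (∀ i, (⟨m, g i⟩ : FinOp X) ∈ C) →
    (⟨m, fun x => f fun i => g i x⟩ : FinOp X) ∈ C)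

/-- `C` is a local clone: a clone each of whose `n`-ary fragments is closed in the
product topology on `X^(X^n)`, where `X` carries the discrete topology. -/
def IsLocalClone (C : Set (FinOp X)) : Prop :=
  IsClone C ∧
  ∀ n : ℕ,
    letI : TopologicalSpace X := ⊥
    IsClosed {f : (Fin (n + 1) → X) → X | (⟨n, f⟩ : FinOp X) ∈ C}

/-- The smallest local clone containing `F` (the local clone generated by `F`). -/
def cllClosure (F : Set (FinOp X)) : Set (FinOp X) :=
  ⋂₀ {C : Set (FinOp X) | IsLocalClone C ∧ F ⊆ C}

/-- `f` preserves the relation `ρ`. -/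
def Preserves {n m : ℕ} (f : (Fin (n + 1) → X) → X) (ρ : Set (Fin (m + 1) → X)) : Prop :=
  ∀ r : Fin (n + 1) → Fin (m + 1) → X, (∀ i, r i ∈ ρ) → (fun j => f fun i => r i j) ∈ ρ

/-- `Pol R`: all finitary operations preserving every relation in `R`. -/
def Polymorphisms (R : Set (FinRel X)) : Set (FinOp X) :=
  {f | ∀ ρ ∈ R, Preserves f.2 ρ.2}

/-- `Inv F`: all finitary relations invariant under every operation in `F`. -/
def Invariants (F : Set (FinOp X)) : Set (FinRel X) :=
  {ρ | ∀ f ∈ F, Preserves f.2 ρ.2}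

/-- The clone of projections. -/
def projClone (X : Type) : Set (FinOp X) :=
  {f | ∃ k : Fin (f.1 + 1), f.2 = fun x => x k}

/-- The map `σ` assigning to a clone `C` on the subset `A ⊆ X` the set of all finitary
operations on `X` agreeing on the appropriate power of `A` with some member of `C` of the
same arity. -/
def sigmaMap {X : Type} (A : Set X) (C : Set (FinOp ↥A)) : Set (FinOp X) :=
  {g | ∃ f : (Fin (g.1 + 1) → ↥A) → ↥A, (⟨g.1, f⟩ : FinOp ↥A) ∈ C ∧
    ∀ x : Fin (g.1 + 1) → ↥A, g.2 (fun i => (x i : X)) = (f x : X)}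

/-- `Pol({A})`: all finitary operations on `X` preserving the unary relation `A`. -/
def unaryPol {X : Type} (A : Set X) : Set (FinOp X) :=
  Polymorphisms {(⟨0, {x | x 0 ∈ A}⟩ : FinRel X)}

lemma sigma_fragment_closed {X : Type} (A : Set X) (hfin : A.Finite) (C : Set (FinOp ↥A)) (n : ℕ) :
    letI : TopologicalSpace X := ⊥
    IsClosed {f : (Fin (n + 1) → X) → X | (⟨n, f⟩ : FinOp X) ∈ sigmaMap A C} := by
  letI : TopologicalSpace X := ⊥
  haveI : DiscreteTopology X := ⟨rfl⟩
  haveI : Finite ↥A := hfin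
  have he : {f : (Fin (n + 1) → X) → X | (⟨n, f⟩ : FinOp X) ∈ sigmaMap A C} =
      (fun (g : (Fin (n + 1) → X) → X) (x : Fin (n + 1) → ↥A) => g (fun i => (x i : X))) ⁻¹'
        {h : (Fin (n + 1) → ↥A) → X | ∃ f : (Fin (n + 1) → ↥A) → ↥A,
          (⟨n, f⟩ : FinOp ↥A) ∈ C ∧ ∀ x, h x = (f x : X)} := rfl
  rw [he]
  exact (isClosed_discrete _).preimage (continuous_pi fun x => continuous_apply _)

lemma sigma_mono {X : Type} (A : Set X) {C D : Set (FinOp ↥A)} (h : C ⊆ D) :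
    sigmaMap A C ⊆ sigmaMap A D := fun _ ⟨f, hf, ha⟩ => ⟨f, h hf, ha⟩

lemma sigma_isClone {X : Type} (A : Set X) (C : Set (FinOp ↥A)) (hC : IsClone C) :
    IsClone (sigmaMap A C) := by
  constructor
  · intro n k
    exact ⟨fun x => x k, hC.1 n k, fun x => rfl⟩
  · rintro n m g gi hg hgi
    obtain ⟨f, hfC, hfa⟩ := hg
    have hfa' : ∀ x : Fin (n + 1) → ↥A, g (fun i => (x i : X)) = (f x : X) := hfa
    choose fi hfiC hfia using hgi
    refine ⟨fun x => f fun i => fi i x, hC.2 n m f fi hfC hfiC, fun x => ?_⟩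
    show g (fun i => gi i fun j => (x j : X)) = _
    have h1 : (fun i => gi i fun j => (x j : X)) = fun i => ((fi i x : X)) :=
      funext fun i => hfia i x
    rw [h1]
    exact hfa' (fun i => fi i x)

lemma proj_mem_sigma {X : Type} (A : Set X) (n : ℕ) (k : Fin (n + 1)) :
    (⟨n, fun x => x k⟩ : FinOp X) ∈ sigmaMap A (projClone ↥A) :=
  ⟨fun x => x k, ⟨k, rfl⟩, fun _ => rfl⟩

lemma sigma_sub_unaryPol {X : Type} (A : Set X) (C : Set (FinOp ↥A)) :
    sigmaMap A C ⊆ unaryPol A := by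
  rintro ⟨n, g⟩ ⟨f, hfC, hfa⟩ ρ hρ r hr
  have hfa' : ∀ x : Fin (n + 1) → ↥A, g (fun i => (x i : X)) = (f x : X) := hfa
  rcases Set.mem_singleton_iff.mp hρ with rfl
  show g (fun i => r i 0) ∈ A
  have hmem : ∀ i, r i 0 ∈ A := hr
  have h1 : (fun i => r i 0) = fun i => (((⟨r i 0, hmem i⟩ : ↥A)) : X) := rfl
  rw [h1, hfa']
  exact Subtype.coe_prop _

theorem Set.mem_def {α : Type*} {a : α} {s : Set α} : a ∈ s ↔ s a := Iff.rfl

/-- For a nonempty finite subset `A` of the countably infinite set `X`, the map `σ`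
is an order isomorphism from the lattice of clones on `A` onto the interval
`[σ(projections on A), Pol({A})]` of the lattice of local clones on `X`. -/
theorem cloneLattice_iso_interval (X : Type) [Countable X] [Infinite X]
    (A : Set X) (hfin : A.Finite) (hne : A.Nonempty) :
    (∀ C : Set (FinOp ↥A), IsClone C → IsLocalClone (sigmaMap A C)) ∧
    (∀ C : Set (FinOp ↥A), IsClone C →
      sigmaMap A (projClone ↥A) ⊆ sigmaMap A C ∧ sigmaMap A C ⊆ unaryPol A) ∧
    (∀ C D : Set (FinOp ↥A), IsClone C → IsClone D → (C ⊆ D ↔ sigmaMap A C ⊆ sigmaMap A D)) ∧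
    (∀ D : Set (FinOp X), IsLocalClone D →
      sigmaMap A (projClone ↥A) ⊆ D → D ⊆ unaryPol A →
      ∃ C : Set (FinOp ↥A), IsClone C ∧ sigmaMap A C = D) := by
  classical
  refine ⟨fun C hC => ⟨sigma_isClone A C hC, fun n => sigma_fragment_closed A hfin C n⟩,
    fun C hC => ⟨?_, sigma_sub_unaryPol A C⟩, fun C D hC hD => ⟨fun h => sigma_mono A h, ?_⟩, ?_⟩
  · -- σ(projclone) ⊆ σ(C)
    apply sigma_mono
    rintro ⟨n, f⟩ ⟨k, hk⟩
    have hk' : f = fun x => x k := hk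
    rw [Set.mem_def]
    rw [hk']
    exact hC.1 n k
  · -- injectivity
    rintro hσ ⟨n, f⟩ hf
    set g : (Fin (n + 1) → X) → X := fun x =>
      if h : ∀ i, x i ∈ A then ((f fun i => ⟨x i, h i⟩ : ↥A) : X) else (hne.some : X) with hg
    have hga : ∀ x : Fin (n + 1) → ↥A, g (fun i => (x i : X)) = (f x : X) := by
      intro x
      have h : ∀ i, ((x i : X)) ∈ A := fun i => (x i).2
      have hx : (fun i => (⟨((x i : X)), h i⟩ : ↥A)) = x := funext fun i => Subtype.ext rfl
      show (if h : ∀ i, ((x i : X)) ∈ A then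
          ((f fun i => ⟨(x i : X), h i⟩ : ↥A) : X) else (hne.some : X)) = (f x : X)
      rw [dif_pos h, hx]
    have hmem : (⟨n, g⟩ : FinOp X) ∈ sigmaMap A D := hσ ⟨f, hf, hga⟩
    obtain ⟨f', hf'D, hf'a⟩ := hmem
    have hf'a' : ∀ x : Fin (n + 1) → ↥A, g (fun i => (x i : X)) = (f' x : X) := hf'a
    have hff' : f = f' := by
      funext x
      exact Subtype.ext ((hga x).symm.trans (hf'a' x))
    rw [Set.mem_def, hff']
    exact hf'D
  · -- surjectivity onto interval
    intro D hD hproj hpol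
    set C : Set (FinOp ↥A) := {f | ∃ g : (Fin (f.1 + 1) → X) → X,
      (⟨f.1, g⟩ : FinOp X) ∈ D ∧ ∀ x : Fin (f.1 + 1) → ↥A,
        g (fun i => (x i : X)) = (f.2 x : X)} with hCdef
    have hprojD : ∀ (n : ℕ) (k : Fin (n + 1)), (⟨n, fun x => x k⟩ : FinOp X) ∈ D :=
      fun n k => hproj (proj_mem_sigma A n k)
    have hCclone : IsClone C := by
      constructor
      · intro n k
        exact ⟨fun x => x k, hprojD n k, fun _ => rfl⟩
      · rintro n m f fi hfC hfi
        obtain ⟨g, hgD, hga⟩ := hfC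
        have hga' : ∀ x : Fin (n + 1) → ↥A, g (fun i => (x i : X)) = (f x : X) := hga
        choose gi hgiD hgia using hfi
        refine ⟨fun x => g fun i => gi i x, hD.1.2 n m g gi hgD hgiD, fun x => ?_⟩
        show g (fun i => gi i fun j => (x j : X)) = _
        have h1 : (fun i => gi i fun j => (x j : X)) = fun i => ((fi i x : X)) :=
          funext fun i => hgia i x
        rw [h1]
        exact hga' (fun i => fi i x)
    refine ⟨C, hCclone, Set.Subset.antisymm ?_ ?_⟩
    · -- σC ⊆ D
      rintro ⟨n, g'⟩ ⟨f, hfC, hfa⟩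
      have hfa' : ∀ x : Fin (n + 1) → ↥A, g' (fun i => (x i : X)) = (f x : X) := hfa
      obtain ⟨g, hgD', hga⟩ := hfC
      have hgD : (⟨n, g⟩ : FinOp X) ∈ D := hgD'
      have hga' : ∀ x : Fin (n + 1) → ↥A, g (fun i => (x i : X)) = (f x : X) := hga
      -- patching operation t ∈ σ(projClone) ⊆ D
      set t : (Fin (n + 1 + 1) → X) → X := fun z =>
        if ∀ i : Fin (n + 1), z i.succ ∈ A then z 0 else g' (fun i => z i.succ) with ht
      have htD : (⟨n + 1, t⟩ : FinOp X) ∈ D := by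
        refine hproj ⟨fun x => x 0, ⟨0, rfl⟩, fun x => ?_⟩
        show t (fun i => (x i : X)) = ((x 0 : ↥A) : X)
        simp only [ht]
        exact if_pos fun (i : Fin (n + 1)) => (x i.succ).2
      set gi : Fin (n + 1 + 1) → (Fin (n + 1) → X) → X :=
        Fin.cons g (fun j x => x j) with hgi
      have hgiD : ∀ i, (⟨n, gi i⟩ : FinOp X) ∈ D := by
        intro i
        refine Fin.cases ?_ (fun j => ?_) i
        · simp only [hgi, Fin.cons_zero]; exact hgD
        · simp only [hgi, Fin.cons_succ]; exact hprojD n j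
      have hcomp := hD.1.2 (n + 1) n t gi htD hgiD
      have heq : (fun x => t fun i => gi i x) = g' := by
        funext x
        have hz : (fun i => gi i x) = Fin.cons (g x) x := by
          funext i
          refine Fin.cases ?_ (fun j => ?_) i
          · simp only [hgi, Fin.cons_zero]
          · simp only [hgi, Fin.cons_succ]
        rw [hz]
        simp only [ht, Fin.cons_succ, Fin.cons_zero]
        by_cases h : ∀ i : Fin (n + 1), x i ∈ A
        · rw [if_pos h]
          have hx : x = fun i => (((⟨x i, h i⟩ : ↥A)) : X) := rfl
          rw [hx]
          exact (hga' fun i => ⟨x i, h i⟩).trans (hfa' fun i => ⟨x i, h i⟩).symm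
        · rw [if_neg h]
      rw [Set.mem_def]
      rw [← heq]
      exact hcomp
    · -- D ⊆ σC
      rintro ⟨n, g⟩ hgD
      have hpres : Preserves g {x : Fin 1 → X | x 0 ∈ A} := hpol hgD _ rfl
      have hmem : ∀ x : Fin (n + 1) → ↥A, g (fun i => (x i : X)) ∈ A := fun x =>
        hpres (fun i _ => (x i : X)) (fun i => (x i).2)
      exact ⟨fun x => ⟨g (fun i => (x i : X)), hmem x⟩, ⟨g, hgD, fun _ => rfl⟩, fun _ => rfl⟩
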